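/- Let S be a smooth degree-6 K3 surface in ℙ⁴ containing a smooth irreducible curve C of genus g and degree d, and suppose Pic(S) = ℤH ⊕ ℤC where H is the hyperplane class (H² = 6, H·C = d, C² = 2g − 2). Then S contains a line (i.e., an effective divisor L with H·L = 1 and L² = −2) if and only if d ≡ ±1 (mod 6) and g = (d² − 1)/12; moreover, such a line is unique, given by L = aH + bC with b = 1 if d ≡ 1 (mod 6), b = −1 if d ≡ 5 (mod 6), and a = (1 − db)/6. -/
import Mathlib


/-- The intersection form on `Pic S = ℤH ⊕ ℤC` of a smooth sextic K3 surface
containing a smooth irreducible curve `C` of genus `g` and degree `d`: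
a class `aH + bC` is encoded as the pair `(a, b)`, and
`H² = 6`, `H·C = d`, `C² = 2g − 2`. -/
def interForm (d g : ℤ) (p q : ℤ × ℤ) : ℤ :=
  6 * p.1 * q.1 + d * (p.1 * q.2 + p.2 * q.1) + (2 * g - 2) * p.2 * q.2

lemma key_lemma (d g a b : ℤ) (h1 : 6 * a + d * b = 1)
    (h2 : 6 * a ^ 2 + 2 * a * b * d + (2 * g - 2) * b ^ 2 = -2) :
    b ^ 2 * (d ^ 2 - 12 * g + 12) = 13 := by nlinarith [sq_nonneg b]

lemma line_data (d g a b : ℤ) (hd : 1 ≤ d) (h1 : 6 * a + d * b = 1)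
    (h2 : 6 * a ^ 2 + 2 * a * b * d + (2 * g - 2) * b ^ 2 = -2) :
    (b = 1 ∨ b = -1) ∧ 12 * g = d ^ 2 - 1 := by
  have key := key_lemma d g a b h1 h2
  have hdvd : b ^ 2 ∣ 13 := ⟨d ^ 2 - 12 * g + 12, key.symm⟩
  have hle : b ^ 2 ≤ 13 := Int.le_of_dvd (by norm_num) hdvd
  have hb1 : -3 ≤ b := by nlinarith
  have hb2 : b ≤ 3 := by nlinarith
  interval_cases b <;> [skip; skip; skip; omega; skip; skip; skip] <;>
    constructor <;> omega

/-- with `Pic S = ℤH ⊕ ℤC` as above (`H = (1,0)`, `C = (0,1)`),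
`S` contains a line — an effective class `L` with `H·L = 1` and `L² = −2` —
if and only if `d ≡ ±1 (mod 6)` and `g = (d² − 1)/12`; moreover such a line
is unique, given by `L = aH + bC` with `b = 1` if `d ≡ 1 (mod 6)`, `b = −1`
if `d ≡ 5 (mod 6)`, and `a = (1 − d·b)/6`.
The hypothesis `hRR` encodes Riemann–Roch on the K3 surface: a class of
positive degree and square −2 is effective. -/
theorem line_in_sextic_K3
    (d g : ℤ) (hd : 1 ≤ d) (hg : 0 ≤ g)
    (Eff : Set (ℤ × ℤ))
    (hCeff : ((0 : ℤ), (1 : ℤ)) ∈ Eff)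
    (hRR : ∀ L : ℤ × ℤ, 0 < interForm d g (1, 0) L →
      interForm d g L L = -2 → L ∈ Eff) :
    ((∃ L : ℤ × ℤ, L ∈ Eff ∧ interForm d g (1, 0) L = 1 ∧
        interForm d g L L = -2) ↔
      ((d % 6 = 1 ∨ d % 6 = 5) ∧ 12 * g = d ^ 2 - 1)) ∧
    (∀ L : ℤ × ℤ, L ∈ Eff → interForm d g (1, 0) L = 1 →
      interForm d g L L = -2 →
      L = ((1 - d * (if d % 6 = 1 then 1 else -1)) / 6,
            if d % 6 = 1 then (1 : ℤ) else -1)) := by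
  constructor
  · constructor
    · rintro ⟨⟨a, b⟩, -, h1, h2⟩
      simp only [interForm] at h1 h2
      have h1' : 6 * a + d * b = 1 := by ring_nf at h1 ⊢; linarith
      have h2' : 6 * a ^ 2 + 2 * a * b * d + (2 * g - 2) * b ^ 2 = -2 := by
        ring_nf at h2 ⊢; linarith
      obtain ⟨hb, hgd⟩ := line_data d g a b hd h1' h2'
      refine ⟨?_, hgd⟩
      rcases hb with rfl | rfl
      · left; omega
      · right; omega
    · rintro ⟨hmod, hgd⟩
      set b : ℤ := if d % 6 = 1 then 1 else -1 with hb
      have hdvd6 : 6 * ((1 - d * b) / 6) = 1 - d * b := by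
        rcases hmod with h | h <;> simp [hb, h] <;> omega
      set a : ℤ := (1 - d * b) / 6 with ha
      have hb2 : b ^ 2 = 1 := by rcases hmod with h | h <;> simp [hb, h]
      have h1 : 6 * a + d * b = 1 := by omega
      refine ⟨(a, b), ?_, ?_, ?_⟩
      · apply hRR
        · simp only [interForm]; ring_nf; nlinarith
        · simp only [interForm]; nlinarith
      · simp only [interForm]; ring_nf; nlinarith
      · simp only [interForm]; nlinarith
  · rintro ⟨a, b⟩ - h1 h2
    simp only [interForm] at h1 h2
    have h1' : 6 * a + d * b = 1 := by ring_nf at h1 ⊢; linarith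
    have h2' : 6 * a ^ 2 + 2 * a * b * d + (2 * g - 2) * b ^ 2 = -2 := by
      ring_nf at h2 ⊢; linarith
    obtain ⟨hb, hgd⟩ := line_data d g a b hd h1' h2'
    rcases hb with rfl | rfl
    · have hm : d % 6 = 1 := by omega
      rw [if_pos hm]
      simp only [Prod.mk.injEq]
      exact ⟨by omega, trivial⟩
    · have hm : d % 6 = 5 := by omega
      have : ¬ d % 6 = 1 := by omega
      rw [if_neg this]
      simp only [Prod.mk.injEq]
      exact ⟨by omega, trivial⟩
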